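/- arXiv:2009.06038 — 7 statements merged into one kernel-verified Lean document; each statement's English description precedes it below -/
import Mathlib

section
/- Let ρ be a symmetric linear operator (Ricci) on an n-dimensional real inner product space with trace S (scalar curvature), and for a real k define Ein_k = S·id − k·ρ. If 0 < k < l < n and Ein_l is positive definite, then Ein_k is positive definite and S > 0. -/
open RealInnerProductSpace

lemma trace_eq_sum_inner' {E : Type*} [NormedAddCommGroup E] [InnerProductSpace ℝ E]
    [FiniteDimensional ℝ E] (T : E →ₗ[ℝ] E) :
    LinearMap.trace ℝ E T =
      ∑ i, ⟪T (stdOrthonormalBasis ℝ E i), stdOrthonormalBasis ℝ E i⟫ := by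
  let b := stdOrthonormalBasis ℝ E
  rw [LinearMap.trace_eq_matrix_trace ℝ b.toBasis, Matrix.trace]
  congr 1
  ext i
  rw [Matrix.diag_apply, LinearMap.toMatrix_apply, OrthonormalBasis.coe_toBasis,
    OrthonormalBasis.coe_toBasis_repr_apply, OrthonormalBasis.repr_apply_apply,
    real_inner_comm]

/-- If `0 < k < l < n` and `Ein_l = S•id - l•ρ` is positive definite,
then `Ein_k` is positive definite and `S > 0`. -/
theorem stmt_0 {E : Type*} [NormedAddCommGroup E] [InnerProductSpace ℝ E]
    [FiniteDimensional ℝ E] {n : ℕ} (hn : Module.finrank ℝ E = n) (hn1 : 1 ≤ n)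
    (ρ : E →ₗ[ℝ] E) (hρ : ρ.IsSymmetric) (S : ℝ) (hS : S = LinearMap.trace ℝ E ρ)
    {k l : ℝ} (hk : 0 < k) (hkl : k < l) (hl : l < n)
    (hposl : ∀ v : E, v ≠ 0 →
      0 < ⟪(S • (LinearMap.id : E →ₗ[ℝ] E) - l • ρ) v, v⟫) :
    (∀ v : E, v ≠ 0 →
      0 < ⟪(S • (LinearMap.id : E →ₗ[ℝ] E) - k • ρ) v, v⟫) ∧ 0 < S := by
  set T : E →ₗ[ℝ] E := S • (LinearMap.id : E →ₗ[ℝ] E) - l • ρ with hT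
  have htrace : LinearMap.trace ℝ E T = (n - l) * S := by
    rw [hT, map_sub, map_smul, map_smul, LinearMap.trace_id, hn, ← hS, smul_eq_mul, smul_eq_mul]
    ring
  have hb : ∀ i, stdOrthonormalBasis ℝ E i ≠ 0 := fun i =>
    (stdOrthonormalBasis ℝ E).orthonormal.ne_zero i
  have hne : Nonempty (Fin (Module.finrank ℝ E)) := by
    rw [hn]; exact ⟨⟨0, hn1⟩⟩
  have htrpos : 0 < LinearMap.trace ℝ E T := by
    rw [trace_eq_sum_inner' T]
    exact Finset.sum_pos (fun i _ => hposl _ (hb i)) Finset.univ_nonempty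
  have hSpos : 0 < S := by
    rw [htrace] at htrpos
    have hnl : 0 < (n : ℝ) - l := by linarith
    nlinarith
  refine ⟨fun v hv => ?_, hSpos⟩
  have h1 := hposl v hv
  have hv2 : 0 < ⟪v, v⟫ := lt_of_le_of_ne real_inner_self_nonneg fun h => hv ((@inner_self_eq_zero ℝ _ _ _ _ v).mp h.symm)
  rw [hT] at h1
  simp only [LinearMap.sub_apply, LinearMap.smul_apply, LinearMap.id_apply,
    inner_sub_left, real_inner_smul_left] at h1 ⊢
  rcases le_or_gt ⟪ρ v, v⟫ 0 with h | h
  · nlinarith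
  · nlinarith
end

section
/- Let ρ be a symmetric operator on an n-dimensional real inner product space with trace S, and Ein_k = S·id − k·ρ. If k < l < 0 and Ein_k is positive definite, then Ein_l is positive definite and S > 0. -/
open RealInnerProductSpace

/-- If `k < l < 0` and `Ein_k = S•id - k•ρ` is positive definite,
then `Ein_l` is positive definite and `S > 0`. -/
theorem stmt_1 {E : Type*} [NormedAddCommGroup E] [InnerProductSpace ℝ E]
    [FiniteDimensional ℝ E] {n : ℕ} (hn : Module.finrank ℝ E = n) (hn1 : 1 ≤ n)
    (ρ : E →ₗ[ℝ] E) (hρ : ρ.IsSymmetric) (S : ℝ) (hS : S = LinearMap.trace ℝ E ρ)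
    {k l : ℝ} (hkl : k < l) (hl : l < 0)
    (hposk : ∀ v : E, v ≠ 0 →
      0 < ⟪(S • (LinearMap.id : E →ₗ[ℝ] E) - k • ρ) v, v⟫) :
    (∀ v : E, v ≠ 0 →
      0 < ⟪(S • (LinearMap.id : E →ₗ[ℝ] E) - l • ρ) v, v⟫) ∧ 0 < S := by
  have hk : k < 0 := hkl.trans hl
  -- First show S > 0 using an orthonormal basis and the trace.
  have b : OrthonormalBasis (Fin n) ℝ E := stdOrthonormalBasis ℝ E |>.reindex
    (finCongr (by rw [hn]))
  have htr : LinearMap.trace ℝ E ρ = ∑ i, ⟪ρ (b i), b i⟫ := by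
    rw [LinearMap.trace_eq_matrix_trace ℝ b.toBasis, Matrix.trace]
    congr 1
    ext i
    rw [Matrix.diag_apply, LinearMap.toMatrix_apply, OrthonormalBasis.coe_toBasis_repr_apply,
      OrthonormalBasis.coe_toBasis, b.repr_apply_apply, real_inner_comm]
  have hsum : 0 < ∑ i : Fin n, ⟪(S • (LinearMap.id : E →ₗ[ℝ] E) - k • ρ) (b i), b i⟫ := by
    apply Finset.sum_pos
    · intro i _
      exact hposk (b i) (b.toBasis.ne_zero i)
    · simp [Finset.univ_nonempty_iff, ← Fin.pos_iff_nonempty]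
      omega
  have hexpand : ∀ (c : ℝ) (v : E),
      ⟪(S • (LinearMap.id : E →ₗ[ℝ] E) - c • ρ) v, v⟫ = S * ⟪v, v⟫ - c * ⟪ρ v, v⟫ := by
    intro c v
    simp [inner_sub_left, real_inner_smul_left]
  have hSpos : 0 < S := by
    have h2 : ∑ i : Fin n, ⟪(S • (LinearMap.id : E →ₗ[ℝ] E) - k • ρ) (b i), b i⟫
        = n * S - k * S := by
      have h3 : ∀ i : Fin n, ⟪b i, b i⟫ = (1 : ℝ) := fun i => by
        rw [real_inner_self_eq_norm_sq, b.orthonormal.1 i]; norm_num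
      simp only [hexpand, h3, mul_one]
      rw [Finset.sum_sub_distrib, Finset.sum_const, ← Finset.mul_sum, ← htr, ← hS]
      simp [mul_comm]
    rw [h2] at hsum
    nlinarith [hn1, (by exact_mod_cast hn1 : (1:ℝ) ≤ (n:ℝ))]
  refine ⟨fun v hv => ?_, hSpos⟩
  have h1 := hposk v hv
  rw [hexpand] at h1 ⊢
  have hvv : 0 < ⟪v, v⟫ := by
    rw [real_inner_self_eq_norm_sq]; exact pow_pos (norm_pos_iff.mpr hv) 2
  have key : k * (S * ⟪v, v⟫ - l * ⟪ρ v, v⟫)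
      = l * (S * ⟪v, v⟫ - k * ⟪ρ v, v⟫) + (k - l) * (S * ⟪v, v⟫) := by ring
  have hneg : k * (S * ⟪v, v⟫ - l * ⟪ρ v, v⟫) < 0 := by
    rw [key]
    have a1 := mul_neg_of_neg_of_pos hl h1
    have a2 := mul_neg_of_neg_of_pos (sub_neg.mpr hkl) (mul_pos hSpos hvv)
    linarith
  by_contra h
  push_neg at h
  nlinarith
end

section
/- Let ρ be a symmetric operator on an n-dimensional real inner product space with trace S and Ein_k = S·id − k·ρ. For an integer k with 1 ≤ k ≤ n−1, the operator ρ is (n−k)-positive (the sum of its lowest n−k eigenvalues is positive) if and only if Ein_k is k-positive (the sum of its lowest k eigenvalues is positive). -/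
open RealInnerProductSpace

/-- For an integer `1 ≤ k ≤ n-1`, `ρ` is `(n-k)`-positive (every sum of
`n-k` of its eigenvalues is positive, equivalently the sum of the lowest `n-k` is)
iff `Ein_k = S•id - k•ρ` is `k`-positive; the eigenvalues of `Ein_k` are `S - k•μ i`. -/
theorem stmt_2 {E : Type*} [NormedAddCommGroup E] [InnerProductSpace ℝ E]
    [FiniteDimensional ℝ E] {n : ℕ} (hn : Module.finrank ℝ E = n)
    (ρ : E →ₗ[ℝ] E) (hρ : ρ.IsSymmetric) (S : ℝ) (hS : S = LinearMap.trace ℝ E ρ)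
    {k : ℕ} (hk1 : 1 ≤ k) (hk2 : k ≤ n - 1)
    (μ : Fin n → ℝ) (hμ : μ = hρ.eigenvalues hn) :
    (∀ s : Finset (Fin n), s.card = n - k → 0 < ∑ i ∈ s, μ i) ↔
      (∀ s : Finset (Fin n), s.card = k → 0 < ∑ i ∈ s, (S - (k : ℝ) * μ i)) := by
  have hn2 : 2 ≤ n := by omega
  have hkn : k ≤ n := by omega
  -- trace equals sum of eigenvalues
  have hSsum : S = ∑ i, μ i := by
    subst hμ hS
    rw [LinearMap.trace_eq_matrix_trace ℝ (hρ.eigenvectorBasis hn).toBasis, Matrix.trace]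
    congr 1
    funext i
    rw [Matrix.diag_apply, LinearMap.toMatrix_apply, OrthonormalBasis.coe_toBasis,
      hρ.apply_eigenvectorBasis, map_smul]
    simp
  -- key identity: for any s, ∑ i in s, (S - k μ i) = k * (∑ all μ - ∑ s μ) + (card s - k) * S
  have key : ∀ s : Finset (Fin n), s.card = k →
      ∑ i ∈ s, (S - (k : ℝ) * μ i) = (k : ℝ) * ∑ i ∈ sᶜ, μ i := by
    intro s hs
    rw [Finset.sum_sub_distrib, Finset.sum_const, hs, ← Finset.mul_sum, nsmul_eq_mul,
      ← mul_sub]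
    congr 1
    have := Finset.sum_add_sum_compl s μ
    rw [hSsum]
    linarith
  constructor
  · intro h s hs
    rw [key s hs]
    have hc : sᶜ.card = n - k := by
      rw [Finset.card_compl, hs, Fintype.card_fin]
    have := h sᶜ hc
    positivity
  · intro h s hs
    have hc : sᶜ.card = k := by
      rw [Finset.card_compl, hs, Fintype.card_fin]
      omega
    have := h sᶜ hc
    rw [key sᶜ hc, compl_compl] at this
    have hk0 : (0:ℝ) < k := by exact_mod_cast hk1
    nlinarith
end

section
/- Let ρ be a symmetric operator on an n-dimensional real inner product space with trace S and Ein_k = S·id − k·ρ. For an integer k with 0 ≤ k ≤ n−1, if Ein_k is positive definite then ρ has at least k+1 positive eigenvalues. -/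
open RealInnerProductSpace

/-- For an integer `0 ≤ k ≤ n-1`, if `Ein_k = S•id - k•ρ` is positive
definite then `ρ` has at least `k+1` positive eigenvalues. -/
theorem stmt_3 {E : Type*} [NormedAddCommGroup E] [InnerProductSpace ℝ E]
    [FiniteDimensional ℝ E] {n : ℕ} (hn : Module.finrank ℝ E = n)
    (ρ : E →ₗ[ℝ] E) (hρ : ρ.IsSymmetric) (S : ℝ) (hS : S = LinearMap.trace ℝ E ρ)
    {k : ℕ} (hk : k ≤ n - 1) (hn1 : 1 ≤ n)
    (μ : Fin n → ℝ) (hμ : μ = hρ.eigenvalues hn)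
    (hpos : ∀ v : E, v ≠ 0 →
      0 < ⟪(S • (LinearMap.id : E →ₗ[ℝ] E) - (k : ℝ) • ρ) v, v⟫) :
    k + 1 ≤ (Finset.univ.filter fun i => 0 < μ i).card := by
  have hkn : k < n := by omega
  haveI : Nonempty (Fin n) := ⟨⟨0, by omega⟩⟩
  set b := hρ.eigenvectorBasis hn with hb
  -- each basis vector is an eigenvector with unit norm
  have happ : ∀ i, ρ (b i) = μ i • b i := by
    intro i
    rw [hμ]
    exact hρ.apply_eigenvectorBasis hn i
  have hnorm : ∀ i, ‖b i‖ = 1 := fun i => b.orthonormal.1 i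
  -- trace equals the sum of the eigenvalues
  have htrace : S = ∑ i, μ i := by
    rw [hS, LinearMap.trace_eq_matrix_trace ℝ b.toBasis ρ, Matrix.trace]
    congr 1
    ext i
    rw [Matrix.diag_apply, LinearMap.toMatrix_apply]
    simp [happ i]
  -- positivity applied to each eigenvector gives S > k * μ i
  have key : ∀ i, (k : ℝ) * μ i < S := by
    intro i
    have hb0 : b i ≠ 0 := by
      intro h
      have := hnorm i
      rw [h, norm_zero] at this
      norm_num at this
    have := hpos (b i) hb0
    have hinner : ⟪(S • (LinearMap.id : E →ₗ[ℝ] E) - (k : ℝ) • ρ) (b i), b i⟫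
        = S - (k : ℝ) * μ i := by
      have hnn : (⟪b i, b i⟫ : ℝ) = 1 := by
        rw [real_inner_self_eq_norm_sq, hnorm i]; norm_num
      simp only [LinearMap.sub_apply, LinearMap.smul_apply, LinearMap.id_apply,
        inner_sub_left, real_inner_smul_left, happ i]
      rw [hnn]
      ring
    rw [hinner] at this
    linarith
  -- max eigenvalue
  obtain ⟨i0, -, hi0⟩ := Finset.exists_max_image Finset.univ μ Finset.univ_nonempty
  set M := μ i0 with hM
  have hMle : ∀ i, μ i ≤ M := fun i => hi0 i (Finset.mem_univ i)
  have hMpos : 0 < M := by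
    by_contra h
    push_neg at h
    have hSle : S ≤ n * M := by
      rw [htrace]
      calc ∑ i, μ i ≤ ∑ _i : Fin n, M := Finset.sum_le_sum fun i _ => hMle i
        _ = n * M := by simp [mul_comm]
    have := key i0
    have : (k : ℝ) * M < n * M := lt_of_lt_of_le this hSle
    have hkn' : (k : ℝ) < n := by exact_mod_cast hkn
    nlinarith
  by_contra hcon
  push_neg at hcon
  set P := Finset.univ.filter fun i => 0 < μ i with hP
  have hcard : P.card ≤ k := by omega
  have hsum : S ≤ P.card * M := by
    rw [htrace, ← Finset.sum_filter_add_sum_filter_not Finset.univ (fun i => 0 < μ i) μ]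
    have h1 : ∑ i ∈ P, μ i ≤ P.card * M := by
      calc ∑ i ∈ P, μ i ≤ ∑ _i ∈ P, M := Finset.sum_le_sum fun i _ => hMle i
        _ = P.card * M := by simp [mul_comm]
    have h2 : ∑ i ∈ Finset.univ.filter (fun i => ¬ 0 < μ i), μ i ≤ 0 := by
      apply Finset.sum_nonpos
      intro i hi
      simp only [Finset.mem_filter] at hi
      linarith [hi.2]
    linarith
  have hcast : (P.card : ℝ) * M ≤ (k : ℝ) * M :=
    mul_le_mul_of_nonneg_right (Nat.cast_le.mpr hcard) hMpos.le
  have := key i0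
  linarith
end

section
/- Let ρ be a symmetric operator on an n-dimensional real inner product space with trace S, and Ein_k = S·id − k·ρ. If Ein_k is positive definite for some k with 0 < k < n−1, then Ein_k is (n−1)-positive, and hence Ein_{−k/(n−1−k)} is positive definite. -/
open RealInnerProductSpace

lemma trace_eq_sum_inner_onb {E : Type*} [NormedAddCommGroup E] [InnerProductSpace ℝ E]
    [FiniteDimensional ℝ E] {ι : Type*} [Fintype ι] [DecidableEq ι]
    (b : OrthonormalBasis ι ℝ E) (f : E →ₗ[ℝ] E) :
    LinearMap.trace ℝ E f = ∑ i, ⟪b i, f (b i)⟫ := by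
  rw [LinearMap.trace_eq_matrix_trace ℝ b.toBasis, Matrix.trace]
  congr 1
  ext i
  rw [Matrix.diag_apply, LinearMap.toMatrix_apply, OrthonormalBasis.coe_toBasis,
    OrthonormalBasis.coe_toBasis_repr_apply, OrthonormalBasis.repr_apply_apply]

/-- If `Ein_k = S•id - k•ρ` is positive definite for some `0 < k < n-1`,
then `Ein_k` is `(n-1)`-positive (the sum over any orthonormal `(n-1)`-frame of its
quadratic form is positive, equivalently the sum of its lowest `n-1` eigenvalues is
positive), and hence `Ein_{-k/(n-1-k)}` is positive definite. -/
theorem stmt_6 {E : Type*} [NormedAddCommGroup E] [InnerProductSpace ℝ E]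
    [FiniteDimensional ℝ E] {n : ℕ} (hn : Module.finrank ℝ E = n)
    (ρ : E →ₗ[ℝ] E) (hρ : ρ.IsSymmetric) (S : ℝ) (hS : S = LinearMap.trace ℝ E ρ)
    {k : ℝ} (hk : 0 < k) (hkn : k < (n : ℝ) - 1)
    (hpos : ∀ v : E, v ≠ 0 →
      0 < ⟪(S • (LinearMap.id : E →ₗ[ℝ] E) - k • ρ) v, v⟫) :
    (∀ v : Fin (n - 1) → E, Orthonormal ℝ v →
      0 < ∑ i, ⟪(S • (LinearMap.id : E →ₗ[ℝ] E) - k • ρ) (v i), v i⟫) ∧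
    (∀ v : E, v ≠ 0 →
      0 < ⟪(S • (LinearMap.id : E →ₗ[ℝ] E) - (-k / ((n : ℝ) - 1 - k)) • ρ) v, v⟫) := by
  have hn1 : (1 : ℝ) < n := by linarith
  have hn2 : 2 ≤ n := by exact_mod_cast hn1
  constructor
  · intro v hv
    apply Finset.sum_pos
    · intro i _
      exact hpos (v i) (hv.ne_zero i)
    · have h1 : 1 ≤ n - 1 := by omega
      haveI : Nonempty (Fin (n - 1)) := ⟨⟨0, by omega⟩⟩
      exact Finset.univ_nonempty
  · intro v hv
    set A : E →ₗ[ℝ] E := S • (LinearMap.id : E →ₗ[ℝ] E) - k • ρ with hA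
    -- orthonormal basis whose first vector is the normalization of v
    set u : E := ‖v‖⁻¹ • v with hu
    have hun : ‖u‖ = 1 := norm_smul_inv_norm hv
    have hcard : Module.finrank ℝ E = Fintype.card (Fin n) := by simpa using hn
    set i₀ : Fin n := ⟨0, by omega⟩ with hi₀
    have horth : Orthonormal ℝ (({i₀} : Set (Fin n)).restrict (fun _ => u)) := by
      refine ⟨fun i => hun, ?_⟩
      intro i j hij
      exact absurd (Subsingleton.elim i j) hij
    obtain ⟨b, hb⟩ := horth.exists_orthonormalBasis_extension_of_card_eq hcard
    have hb0 : b i₀ = u := hb i₀ rfl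
    -- trace of A
    have htrρ : LinearMap.trace ℝ E ρ = ∑ i, ⟪b i, ρ (b i)⟫ := trace_eq_sum_inner_onb b ρ
    have htrA : LinearMap.trace ℝ E A = ((n : ℝ) - k) * S := by
      rw [hA, map_sub, map_smul, map_smul, LinearMap.trace_id, hn, ← hS]
      ring_nf
    have htrA' : LinearMap.trace ℝ E A = ∑ i, ⟪b i, A (b i)⟫ := trace_eq_sum_inner_onb b A
    -- positivity of the partial sum
    have hiz : (⟨1, by omega⟩ : Fin n) ∈ Finset.univ.erase i₀ := by
      refine Finset.mem_erase.mpr ⟨?_, Finset.mem_univ _⟩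
      intro h
      simpa [hi₀] using congrArg Fin.val h
    have hsum_pos : 0 < ∑ i ∈ Finset.univ.erase i₀, ⟪b i, A (b i)⟫ := by
      apply Finset.sum_pos
      · intro i _
        rw [real_inner_comm]
        exact hpos (b i) (b.orthonormal.ne_zero i)
      · exact ⟨_, hiz⟩
    have hsplit : ⟪b i₀, A (b i₀)⟫ + ∑ i ∈ Finset.univ.erase i₀, ⟪b i, A (b i)⟫
        = ∑ i, ⟪b i, A (b i)⟫ := by
      exact Finset.add_sum_erase _ (fun i => ⟪b i, A (b i)⟫) (Finset.mem_univ i₀)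
    have hkey0 : ⟪A u, u⟫ < ((n : ℝ) - k) * S := by
      have : ⟪b i₀, A (b i₀)⟫ < ((n : ℝ) - k) * S := by
        rw [← htrA, htrA']
        linarith [hsplit, hsum_pos]
      rwa [hb0, real_inner_comm] at this
    -- relate ⟪A v, v⟫ to ⟪A u, u⟫
    have hvnorm : (0 : ℝ) < ‖v‖ := norm_pos_iff.mpr hv
    have hvu : v = ‖v‖ • u := by rw [hu, smul_inv_smul₀ (ne_of_gt hvnorm)]
    have hAvu : ⟪A v, v⟫ = ‖v‖ ^ 2 * ⟪A u, u⟫ := by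
      conv_lhs => rw [hvu]
      rw [map_smul, real_inner_smul_left, real_inner_smul_right]
      ring
    have hkey : ⟪A v, v⟫ < ((n : ℝ) - k) * S * ‖v‖ ^ 2 := by
      rw [hAvu]
      have := mul_lt_mul_of_pos_left hkey0 (by positivity : (0:ℝ) < ‖v‖ ^ 2)
      linarith
    -- algebra
    have hAv : ⟪A v, v⟫ = S * ‖v‖ ^ 2 - k * ⟪ρ v, v⟫ := by
      rw [hA]
      simp only [LinearMap.sub_apply, LinearMap.smul_apply, LinearMap.id_coe, id_eq,
        inner_sub_left, real_inner_smul_left]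
      rw [real_inner_self_eq_norm_sq]
    have hc : (0 : ℝ) < (n : ℝ) - 1 - k := by linarith
    have hgoal : ⟪(S • (LinearMap.id : E →ₗ[ℝ] E) - (-k / ((n : ℝ) - 1 - k)) • ρ) v, v⟫
        = (((n : ℝ) - k) * S * ‖v‖ ^ 2 - ⟪A v, v⟫) / ((n : ℝ) - 1 - k) := by
      simp only [LinearMap.sub_apply, LinearMap.smul_apply, LinearMap.id_coe, id_eq,
        inner_sub_left, real_inner_smul_left]
      rw [real_inner_self_eq_norm_sq, hAv]
      field_simp
      ring
    rw [hgoal]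
    apply div_pos _ hc
    linarith
end

section
/- Let ρ be a symmetric operator on an n-dimensional real inner product space with trace S and n ≥ 3. If n−2 ≤ k < n and Ein_k = S·id − k·ρ is positive definite, then Ein_{−k} = S·id + k·ρ is positive definite. -/
open RealInnerProductSpace

/-- For `n ≥ 3` and `n-2 ≤ k < n`, if `Ein_k = S•id - k•ρ` is positive
definite, then `Ein_{-k} = S•id + k•ρ` is positive definite. -/
theorem stmt_7 {E : Type*} [NormedAddCommGroup E] [InnerProductSpace ℝ E]
    [FiniteDimensional ℝ E] {n : ℕ} (hn : Module.finrank ℝ E = n) (hn3 : 3 ≤ n)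
    (ρ : E →ₗ[ℝ] E) (hρ : ρ.IsSymmetric) (S : ℝ) (hS : S = LinearMap.trace ℝ E ρ)
    {k : ℝ} (hk1 : (n : ℝ) - 2 ≤ k) (hk2 : k < n)
    (hpos : ∀ v : E, v ≠ 0 →
      0 < ⟪(S • (LinearMap.id : E →ₗ[ℝ] E) - k • ρ) v, v⟫) :
    ∀ v : E, v ≠ 0 →
      0 < ⟪(S • (LinearMap.id : E →ₗ[ℝ] E) + k • ρ) v, v⟫ := by
  have hk0 : 0 < k := by
    have : (3:ℝ) ≤ n := by exact_mod_cast hn3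
    linarith
  -- reformulate hypothesis
  have hq : ∀ v : E, v ≠ 0 → k * ⟪ρ v, v⟫ < S * ⟪v, v⟫ := by
    intro v hv
    have := hpos v hv
    simp only [LinearMap.sub_apply, LinearMap.smul_apply, LinearMap.id_coe, id_eq,
      inner_sub_left, real_inner_smul_left] at this
    linarith
  -- trace as sum over any orthonormal basis
  have htr : ∀ b : OrthonormalBasis (Fin n) ℝ E, S = ∑ i, ⟪ρ (b i), b i⟫ := by
    intro b
    rw [hS, LinearMap.trace_eq_matrix_trace ℝ b.toBasis, Matrix.trace]
    simp only [Matrix.diag, LinearMap.toMatrix_apply, OrthonormalBasis.coe_toBasis_repr_apply,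
      OrthonormalBasis.repr_apply_apply, OrthonormalBasis.coe_toBasis, RCLike.inner_apply,
      conj_trivial]
    exact Finset.sum_congr rfl fun i _ => real_inner_comm _ _
  have hcard : Module.finrank ℝ E = Fintype.card (Fin n) := by simp [hn]
  haveI : NeZero n := ⟨by omega⟩
  -- positivity of S
  have hSpos : 0 < S := by
    obtain ⟨b⟩ : Nonempty (OrthonormalBasis (Fin n) ℝ E) :=
      ⟨(stdOrthonormalBasis ℝ E).reindex (finCongr hn)⟩
    have hterm : ∀ i : Fin n, k * ⟪ρ (b i), b i⟫ < S := by
      intro i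
      have hb : b i ≠ 0 := b.toBasis.ne_zero i
      have := hq (b i) hb
      have hnorm : ⟪b i, b i⟫ = 1 := by
        have hno := b.orthonormal.1 i
        rw [real_inner_self_eq_norm_mul_norm, hno]; norm_num
      rw [hnorm] at this; linarith
    have hsum : ∑ i : Fin n, k * ⟪ρ (b i), b i⟫ < ∑ _i : Fin n, S :=
      Finset.sum_lt_sum_of_nonempty ⟨⟨0, by omega⟩, Finset.mem_univ _⟩ fun i _ => hterm i
    rw [← Finset.mul_sum, ← htr b] at hsum
    simp only [Finset.sum_const, Finset.card_univ, Fintype.card_fin, nsmul_eq_mul] at hsum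
    nlinarith
  -- main step for unit vectors
  have key : ∀ u : E, ‖u‖ = 1 → (k - (n:ℝ) + 1) * S < k * ⟪ρ u, u⟫ := by
    intro u hu
    have horth : Orthonormal ℝ (Set.restrict {(0 : Fin n)} fun _ => u) := by
      constructor
      · rintro ⟨i, hi⟩; exact hu
      · rintro ⟨i, hi⟩ ⟨j, hj⟩ hij
        exact absurd (Subtype.ext ((hi.trans hj.symm : i = j))) hij
    obtain ⟨b, hb⟩ := horth.exists_orthonormalBasis_extension_of_card_eq hcard
    have hb0 : b 0 = u := hb 0 rfl
    have hS' := htr b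
    rw [← Finset.add_sum_erase _ _ (Finset.mem_univ (0 : Fin n))] at hS'
    have hterm : ∀ i ∈ Finset.univ.erase (0 : Fin n), k * ⟪ρ (b i), b i⟫ < S := by
      intro i _
      have hbne : b i ≠ 0 := b.toBasis.ne_zero i
      have := hq (b i) hbne
      have hnorm : ⟪b i, b i⟫ = 1 := by
        have hno := b.orthonormal.1 i
        rw [real_inner_self_eq_norm_mul_norm, hno]; norm_num
      rw [hnorm] at this; linarith
    have hsum : ∑ i ∈ Finset.univ.erase (0 : Fin n), k * ⟪ρ (b i), b i⟫
        < ∑ _i ∈ Finset.univ.erase (0 : Fin n), S := by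
      refine Finset.sum_lt_sum_of_nonempty ?_ hterm
      refine ⟨⟨1, by omega⟩, Finset.mem_erase.2 ⟨?_, Finset.mem_univ _⟩⟩
      exact Fin.ne_of_val_ne (by simp)
    rw [← Finset.mul_sum] at hsum
    have hcarde : (Finset.univ.erase (0 : Fin n)).card = n - 1 := by
      rw [Finset.card_erase_of_mem (Finset.mem_univ _)]; simp
    rw [Finset.sum_const, hcarde, nsmul_eq_mul] at hsum
    have hn1 : ((n - 1 : ℕ) : ℝ) = (n : ℝ) - 1 := by
      have : (1:ℕ) ≤ n := by omega
      push_cast [this]; ring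
    rw [hn1] at hsum
    rw [hb0] at hS'
    nlinarith [hsum, hS']
  -- conclude
  intro v hv
  have hvn : (0:ℝ) < ‖v‖ := norm_pos_iff.2 hv
  set u : E := ‖v‖⁻¹ • v with hu_def
  have hu : ‖u‖ = 1 := by
    rw [hu_def, norm_smul]; simp [abs_of_pos hvn]; field_simp
  have hk' := key u hu
  have hvu : v = ‖v‖ • u := by
    rw [hu_def, smul_smul]; field_simp; rw [one_smul]
  have hvsq : 0 < ‖v‖^2 := by positivity
  have hinner : ⟪ρ u, u⟫ = (‖v‖^2)⁻¹ * ⟪ρ v, v⟫ := by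
    rw [hu_def]
    simp only [map_smul, real_inner_smul_left, real_inner_smul_right]
    ring
  have h1 : (k - (n:ℝ) + 1) * S * ‖v‖^2 < k * ⟪ρ v, v⟫ := by
    have h2 := mul_lt_mul_of_pos_right hk' hvsq
    rw [hinner] at h2
    have h3 : k * ((‖v‖^2)⁻¹ * ⟪ρ v, v⟫) * ‖v‖^2 = k * ⟪ρ v, v⟫ := by
      field_simp
    rw [h3] at h2
    exact h2
  have hvv : ⟪v, v⟫ = ‖v‖^2 := real_inner_self_eq_norm_sq v
  simp only [LinearMap.add_apply, LinearMap.smul_apply, LinearMap.id_coe, id_eq,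
    inner_add_left, real_inner_smul_left]
  rw [hvv]
  have hkn2 : 0 ≤ k - (n:ℝ) + 2 := by linarith
  nlinarith [h1, mul_nonneg (mul_nonneg hkn2 hSpos.le) hvsq.le]
end

section
/- Let ρ be a symmetric operator on an n-dimensional real inner product space (n ≥ 4) with trace S, A = (1/(n−2))·(ρ − (S/(2(n−1)))·id) the Schouten operator, and k = 2n(n−1)/(3n−4). Define Ā = ((3n−4)/(2n(n−1)(n−2)))·(S·id − k·ρ). Then σ₁(Ā) = σ₁(A) and σ₂(Ā) = σ₂(A); in particular σ₁(A) > 0 and σ₂(A) > 0 if and only if σ₁(Ein_k) > 0 and σ₂(Ein_k) > 0. -/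
set_option maxHeartbeats 1000000 in
/-- For `n ≥ 4`, `A` the Schouten operator, `k = 2n(n-1)/(3n-4)` and
`Ā = ((3n-4)/(2n(n-1)(n-2)))•(S•id - k•ρ)`, one has `σ₁(Ā) = σ₁(A)` and
`σ₂(Ā) = σ₂(A)`; in particular `σ₁(A), σ₂(A) > 0` iff `σ₁(Ein_k), σ₂(Ein_k) > 0`. -/
theorem stmt_11 {E : Type*} [NormedAddCommGroup E] [InnerProductSpace ℝ E]
    [FiniteDimensional ℝ E] {n : ℕ} (hn : Module.finrank ℝ E = n) (hn4 : 4 ≤ n)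
    (ρ : E →ₗ[ℝ] E) (hρ : ρ.IsSymmetric) (S : ℝ) (hS : S = LinearMap.trace ℝ E ρ)
    (k : ℝ) (hk : k = 2 * n * ((n : ℝ) - 1) / (3 * n - 4))
    (A Abar Eink : E →ₗ[ℝ] E)
    (hA : A = (((n : ℝ) - 2)⁻¹) •
      (ρ - (S / (2 * ((n : ℝ) - 1))) • (LinearMap.id : E →ₗ[ℝ] E)))
    (hEink : Eink = S • (LinearMap.id : E →ₗ[ℝ] E) - k • ρ)
    (hAbar : Abar = ((3 * (n : ℝ) - 4) / (2 * n * ((n : ℝ) - 1) * ((n : ℝ) - 2))) • Eink) :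
    (LinearMap.trace ℝ E Abar = LinearMap.trace ℝ E A ∧
      ((LinearMap.trace ℝ E Abar) ^ 2 - LinearMap.trace ℝ E (Abar ∘ₗ Abar)) / 2 =
        ((LinearMap.trace ℝ E A) ^ 2 - LinearMap.trace ℝ E (A ∘ₗ A)) / 2) ∧
    ((0 < LinearMap.trace ℝ E A ∧
        0 < ((LinearMap.trace ℝ E A) ^ 2 - LinearMap.trace ℝ E (A ∘ₗ A)) / 2) ↔
      (0 < LinearMap.trace ℝ E Eink ∧
        0 < ((LinearMap.trace ℝ E Eink) ^ 2 - LinearMap.trace ℝ E (Eink ∘ₗ Eink)) / 2)) := by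
  have hn4' : (4:ℝ) ≤ (n:ℝ) := by exact_mod_cast hn4
  have h0 : (n:ℝ) ≠ 0 := by linarith
  have h1 : (n:ℝ) - 1 ≠ 0 := by intro h; linarith
  have h2 : (n:ℝ) - 2 ≠ 0 := by intro h; linarith
  have h34 : 3 * (n:ℝ) - 4 ≠ 0 := by intro h; linarith
  subst hS hk
  set a := LinearMap.trace ℝ E ρ with ha
  set b := LinearMap.trace ℝ E (ρ ∘ₗ ρ) with hb
  set c := (3 * (n:ℝ) - 4) / (2 * n * ((n:ℝ) - 1) * ((n:ℝ) - 2)) with hc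
  have hd : (0:ℝ) < 2 * n * ((n:ℝ) - 1) * ((n:ℝ) - 2) :=
    mul_pos (mul_pos (by linarith) (by linarith)) (by linarith)
  have hcpos : 0 < c := div_pos (by linarith) hd
  have simptr : ∀ (T : E →ₗ[ℝ] E), True := fun _ => trivial
  have trA : LinearMap.trace ℝ E A = a / (2 * ((n:ℝ) - 1)) := by
    rw [hA]
    simp only [map_smul, map_sub, LinearMap.trace_id, hn, smul_eq_mul, ← ha]
    field_simp
    ring
  have trE : LinearMap.trace ℝ E Eink = a * n * ((n:ℝ) - 2) / (3 * n - 4) := by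
    rw [hEink]
    simp only [map_smul, map_sub, LinearMap.trace_id, hn, smul_eq_mul, ← ha]
    field_simp [show (n:ℝ) * 3 - 4 ≠ 0 by intro h; apply h34; linarith]
    ring
  have trAbar : LinearMap.trace ℝ E Abar = a / (2 * ((n:ℝ) - 1)) := by
    rw [hAbar]
    simp only [map_smul, smul_eq_mul, trE, ← hc]
    rw [hc]
    field_simp
  have trA2 : LinearMap.trace ℝ E (A ∘ₗ A) =
      (4 * ((n:ℝ) - 1) ^ 2 * b - 4 * ((n:ℝ) - 1) * a ^ 2 + n * a ^ 2) /
        (4 * ((n:ℝ) - 1) ^ 2 * ((n:ℝ) - 2) ^ 2) := by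
    rw [hA]
    simp only [LinearMap.smul_comp, LinearMap.comp_smul, LinearMap.sub_comp,
      LinearMap.comp_sub, LinearMap.comp_id, LinearMap.id_comp, map_smul, map_sub,
      LinearMap.trace_id, hn, smul_eq_mul, smul_sub, smul_smul, ← ha, ← hb]
    field_simp
    ring
  have trE2 : LinearMap.trace ℝ E (Eink ∘ₗ Eink) =
      a ^ 2 * n - 4 * n * ((n:ℝ) - 1) * a ^ 2 / (3 * n - 4) +
        4 * n ^ 2 * ((n:ℝ) - 1) ^ 2 * b / (3 * n - 4) ^ 2 := by
    rw [hEink]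
    simp only [LinearMap.smul_comp, LinearMap.comp_smul, LinearMap.sub_comp,
      LinearMap.comp_sub, LinearMap.comp_id, LinearMap.id_comp, map_smul, map_sub,
      LinearMap.trace_id, hn, smul_eq_mul, smul_sub, smul_smul, ← ha, ← hb]
    field_simp [show (n:ℝ) * 3 - 4 ≠ 0 by intro h; apply h34; linarith]
    ring
  have trAbar2 : LinearMap.trace ℝ E (Abar ∘ₗ Abar) =
      c ^ 2 * LinearMap.trace ℝ E (Eink ∘ₗ Eink) := by
    rw [hAbar]
    simp only [LinearMap.smul_comp, LinearMap.comp_smul, map_smul, smul_smul,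
      smul_eq_mul, ← hc]
    ring
  have key : c ^ 2 * (a ^ 2 * n - 4 * n * ((n:ℝ) - 1) * a ^ 2 / (3 * n - 4) +
        4 * n ^ 2 * ((n:ℝ) - 1) ^ 2 * b / (3 * n - 4) ^ 2) =
      (4 * ((n:ℝ) - 1) ^ 2 * b - 4 * ((n:ℝ) - 1) * a ^ 2 + n * a ^ 2) /
        (4 * ((n:ℝ) - 1) ^ 2 * ((n:ℝ) - 2) ^ 2) := by
    rw [hc]
    field_simp
    ring
  rw [trA, trE, trAbar, trA2, trE2, trAbar2, trE2, key]
  refine ⟨⟨rfl, rfl⟩, ?_⟩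
  · have e1 : a / (2 * ((n:ℝ) - 1)) = c * (a * n * ((n:ℝ) - 2) / (3 * n - 4)) := by
      rw [hc]; field_simp [show (n:ℝ) * 3 - 4 ≠ 0 by intro h; apply h34; linarith]
    rw [e1]
    have e2 : ((c * (a * ↑n * ((n:ℝ) - 2) / (3 * n - 4))) ^ 2 -
        (4 * ((n:ℝ) - 1) ^ 2 * b - 4 * ((n:ℝ) - 1) * a ^ 2 + n * a ^ 2) /
          (4 * ((n:ℝ) - 1) ^ 2 * ((n:ℝ) - 2) ^ 2)) / 2 =
        c ^ 2 * (((a * ↑n * ((n:ℝ) - 2) / (3 * n - 4)) ^ 2 -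
          (a ^ 2 * n - 4 * n * ((n:ℝ) - 1) * a ^ 2 / (3 * n - 4) +
            4 * n ^ 2 * ((n:ℝ) - 1) ^ 2 * b / (3 * n - 4) ^ 2)) / 2) := by
      rw [← key]; ring
    rw [e2, mul_pos_iff_of_pos_left hcpos, mul_pos_iff_of_pos_left (pow_pos hcpos 2)]
end
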